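/- Let $s \in \mathbb{R}_{\ge 0}$, $\eta \in (0,1)$, and let $O$ be a Hermitian operator on a finite-dimensional Hilbert space with all eigenvalues in $\{0\} \cup [\eta, 1]$. Let $\Pi$ be the orthogonal projector onto the kernel of $O$. Then $T_{\eta,s}(O)\,\Pi = \Pi$ and $\|T_{\eta,s}(O) - \Pi\| \le 2 e^{-2 s \sqrt{\eta}}$, where $T_{\eta,s}(x) = T_{\lceil s\rceil}\big(\frac{2(1-x)}{1-\eta}-1\big) / T_{\lceil s\rceil}\big(\frac{2}{1-\eta}-1\big)$ and $T_j$ is the Chebyshev polynomial of the first kind. -/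

import Mathlib

open Polynomial

/-- The rescaled and shifted Chebyshev polynomial `T_{η,s}` as a real polynomial. -/
noncomputable def chebPoly (η s : ℝ) : Polynomial ℝ :=
  Polynomial.C (((Polynomial.Chebyshev.T ℝ ⌈s⌉₊).eval (2 / (1 - η) - 1))⁻¹) *
    ((Polynomial.Chebyshev.T ℝ ⌈s⌉₊).comp (Polynomial.C (2 / (1 - η)) * (1 - X) - 1))


lemma exp_two_mul_le {u : ℝ} (h0 : 0 ≤ u) : Real.exp (2*u) * (1-u) ≤ 1+u := by
  set f : ℝ → ℝ := fun u => 1 + u - (1-u)*Real.exp (2*u) with hf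
  have hd : ∀ x : ℝ, HasDerivAt f (1 - ((-1)*Real.exp (2*x) + (1-x)*(Real.exp (2*x)*2))) x := by
    intro x
    have h2 : HasDerivAt (fun y : ℝ => 2*y) 2 x := by simpa using (hasDerivAt_id x).const_mul 2
    have he : HasDerivAt (fun y : ℝ => Real.exp (2*y)) (Real.exp (2*x)*2) x := h2.exp
    have h1 : HasDerivAt (fun y : ℝ => 1 - y) (-1) x := by
      simpa using (hasDerivAt_id' x).const_sub (1:ℝ)
    have := ((hasDerivAt_const x (1:ℝ)).add (hasDerivAt_id x)).sub (h1.mul he)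
    exact this.congr_deriv (by ring)
  have hmono : Monotone f := by
    apply monotone_of_deriv_nonneg
    · exact fun x => (hd x).differentiableAt
    · intro x
      rw [(hd x).deriv]
      have h1 : (1 - 2*x) ≤ Real.exp (-(2*x)) := by linarith [Real.add_one_le_exp (-(2*x))]
      have h2 : Real.exp (2*x) * (1 - 2*x) ≤ Real.exp (2*x) * Real.exp (-(2*x)) :=
        mul_le_mul_of_nonneg_left h1 (Real.exp_pos _).le
      rw [← Real.exp_add] at h2
      simp only [add_neg_cancel, Real.exp_zero] at h2
      nlinarith [Real.exp_pos (2*x)]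
  have := hmono h0
  simp [hf] at this
  nlinarith [this]

lemma T_eval_cosh (n : ℤ) (t : ℝ) :
    (Polynomial.Chebyshev.T ℝ n).eval (Real.cosh t) = Real.cosh (n * t) := by
  apply Complex.ofReal_injective
  have hmap : (((Polynomial.Chebyshev.T ℝ n).eval (Real.cosh t) : ℝ) : ℂ)
      = (Polynomial.Chebyshev.T ℂ n).eval ((Real.cosh t : ℝ) : ℂ) := by
    rw [← Polynomial.Chebyshev.map_T (algebraMap ℝ ℂ) n, Polynomial.eval_map,
      show ((Real.cosh t : ℝ) : ℂ) = algebraMap ℝ ℂ (Real.cosh t) from rfl,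
      Polynomial.eval₂_at_apply]
    rfl
  rw [hmap, Complex.ofReal_cosh]
  have h1 : Complex.cosh (t : ℂ) = Complex.cos ((t:ℂ) * Complex.I) := (Complex.cos_mul_I t).symm
  rw [h1, Polynomial.Chebyshev.T_complex_cos]
  rw [show ((n:ℂ) * ((t:ℂ) * Complex.I)) = ((n:ℂ)*(t:ℂ)) * Complex.I by ring, Complex.cos_mul_I]
  rw [Complex.ofReal_cosh]
  push_cast
  ring_nf

lemma T_eval_abs_le (n : ℤ) {x : ℝ} (hx : x ∈ Set.Icc (-1:ℝ) 1) :
    |(Polynomial.Chebyshev.T ℝ n).eval x| ≤ 1 := by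
  rw [← Real.cos_arccos hx.1 hx.2, Polynomial.Chebyshev.T_real_cos]
  exact Real.abs_cos_le_one _

lemma chebPoly_facts (s η : ℝ) (hs : 0 ≤ s) (hη : η ∈ Set.Ioo (0:ℝ) 1) :
    (chebPoly η s).eval 0 = 1 ∧
    ∀ x ∈ Set.Icc η 1, |(chebPoly η s).eval x| ≤ 2 * Real.exp (-2*s*Real.sqrt η) := by
  set u := Real.sqrt η with hu
  have hu2 : u^2 = η := Real.sq_sqrt hη.1.le
  have hu0 : 0 < u := Real.sqrt_pos.mpr hη.1
  have hu1 : u < 1 := by nlinarith [hη.2]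
  have hη1 : (0:ℝ) < 1 - η := by linarith [hη.2]
  set r := (1+u)/(1-u) with hrdef
  have hr : 0 < r := div_pos (by linarith) (by linarith)
  set t := Real.log r with htdef
  have hcosh : Real.cosh t = 2/(1-η) - 1 := by
    rw [htdef, Real.cosh_log hr, hrdef, ← hu2]
    have h1 : (1:ℝ) - u ≠ 0 := by linarith
    have h2 : (1:ℝ) + u ≠ 0 := by linarith
    have h3 : (1:ℝ) - u^2 ≠ 0 := by nlinarith
    field_simp
    ring
  have ht2 : 2*u ≤ t := by
    have h := exp_two_mul_le hu0.le
    have hle : Real.exp (2*u) ≤ r := (le_div_iff₀ (by linarith)).mpr h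
    calc 2*u = Real.log (Real.exp (2*u)) := (Real.log_exp _).symm
      _ ≤ Real.log r := Real.log_le_log (Real.exp_pos _) hle
  set n : ℕ := ⌈s⌉₊ with hn
  have hsn : s ≤ (n:ℝ) := Nat.le_ceil s
  set D := (Polynomial.Chebyshev.T ℝ (n:ℤ)).eval (2/(1-η)-1) with hDdef
  have hD : D = Real.cosh ((n:ℝ) * t) := by
    rw [hDdef, ← hcosh, T_eval_cosh]
    norm_num
  have hDge : Real.exp (2*s*u) / 2 ≤ D := by
    rw [hD, Real.cosh_eq]
    have hmul : 2*s*u ≤ (n:ℝ)*t := by nlinarith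
    have := Real.exp_le_exp.mpr hmul
    have hp := Real.exp_pos (-((n:ℝ)*t))
    linarith
  have hDpos : 0 < D := lt_of_lt_of_le (by positivity) hDge
  have hinv : D⁻¹ ≤ 2 * Real.exp (-(2*s*u)) := by
    have h1 : D⁻¹ ≤ (Real.exp (2*s*u) / 2)⁻¹ := by
      apply inv_anti₀ (by positivity) hDge
    calc D⁻¹ ≤ (Real.exp (2*s*u) / 2)⁻¹ := h1
      _ = 2 * Real.exp (-(2*s*u)) := by
          rw [Real.exp_neg]; field_simp
  have heval : ∀ x : ℝ, (chebPoly η s).eval x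
      = D⁻¹ * (Polynomial.Chebyshev.T ℝ (n:ℤ)).eval (2/(1-η)*(1-x) - 1) := by
    intro x
    simp [chebPoly, eval_comp]
    rfl
  constructor
  · rw [heval 0]
    norm_num
    exact inv_mul_cancel₀ hDpos.ne'
  · intro x hx
    rw [heval x]
    have hz : 2/(1-η)*(1-x) - 1 ∈ Set.Icc (-1:ℝ) 1 := by
      constructor
      · have : 0 ≤ 2/(1-η)*(1-x) := by
          apply mul_nonneg (by positivity)
          linarith [hx.2]
        linarith
      · have h1 : 1 - x ≤ 1 - η := by linarith [hx.1]
        have h2 : 2/(1-η)*(1-x) ≤ 2/(1-η)*(1-η) :=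
          mul_le_mul_of_nonneg_left h1 (by positivity)
        rw [div_mul_cancel₀] at h2
        · linarith
        · exact hη1.ne'
    have hT := T_eval_abs_le (n:ℤ) hz
    rw [abs_mul, abs_inv, abs_of_pos hDpos]
    calc D⁻¹ * |(Polynomial.Chebyshev.T ℝ (n:ℤ)).eval (2/(1-η)*(1-x) - 1)|
        ≤ D⁻¹ * 1 := mul_le_mul_of_nonneg_left hT (by positivity)
      _ = D⁻¹ := mul_one _
      _ ≤ 2 * Real.exp (-(2*s*u)) := hinv
      _ = 2 * Real.exp (-2*s*u) := by ring_nf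

lemma aeval_eig {d : ℕ} (A : EuclideanSpace ℂ (Fin d) →L[ℂ] EuclideanSpace ℂ (Fin d))
    {μ : ℂ} {v : EuclideanSpace ℂ (Fin d)} (h : A v = μ • v) (q : Polynomial ℂ) :
    (Polynomial.aeval A q) v = q.eval μ • v := by
  induction q using Polynomial.induction_on' with
  | add p r hp hr => simp [ContinuousLinearMap.add_apply, hp, hr, add_smul]
  | monomial m a =>
    have hpow : ∀ k : ℕ, (A^k) v = μ^k • v := by
      intro k
      induction k with
      | zero => simp
      | succ j ih =>
        rw [pow_succ, ContinuousLinearMap.mul_apply, h, map_smul, ih, smul_smul, pow_succ]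
        ring_nf
    rw [Polynomial.aeval_monomial, Polynomial.eval_monomial,
      ContinuousLinearMap.mul_apply, hpow, Algebra.algebraMap_eq_smul_one,
      ContinuousLinearMap.smul_apply, ContinuousLinearMap.one_apply, smul_smul]

lemma norm_le_of_diag {d : ℕ} (A : EuclideanSpace ℂ (Fin d) →L[ℂ] EuclideanSpace ℂ (Fin d))
    (b : OrthonormalBasis (Fin d) ℂ (EuclideanSpace ℂ (Fin d))) (c : Fin d → ℂ) (M : ℝ)
    (hM : 0 ≤ M) (h : ∀ i, A (b i) = c i • b i) (hc : ∀ i, ‖c i‖ ≤ M) : ‖A‖ ≤ M := by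
  apply ContinuousLinearMap.opNorm_le_bound _ hM
  intro v
  have hv : A v = ∑ i, (c i * b.repr v i) • b i := by
    conv_lhs => rw [← b.sum_repr v]
    rw [map_sum]
    simp only [map_smul, h, smul_smul]
    congr 1
    ext i
    rw [mul_comm]
  have hrepr : ∀ j, b.repr (A v) j = c j * b.repr v j := by
    intro j
    classical
    rw [hv, map_sum]
    simp only [map_smul, OrthonormalBasis.repr_self]
    rw [show (∑ x : Fin d, (c x * b.repr v x) • EuclideanSpace.single x 1 :
        EuclideanSpace ℂ (Fin d)) j
        = ∑ x : Fin d, ((c x * b.repr v x) • (EuclideanSpace.single x 1 :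
          EuclideanSpace ℂ (Fin d))) j by rw [WithLp.ofLp_sum]; exact Finset.sum_apply j _ _]
    simp [EuclideanSpace.single_apply]
  have h1 : ‖A v‖ = Real.sqrt (∑ j, ‖c j * b.repr v j‖^2) := by
    rw [← b.repr.norm_map (A v), EuclideanSpace.norm_eq]
    congr 1
    exact Finset.sum_congr rfl fun j _ => by rw [hrepr j]
  have h2 : ‖v‖ = Real.sqrt (∑ j, ‖b.repr v j‖^2) := by
    rw [← b.repr.norm_map v, EuclideanSpace.norm_eq]
  rw [h1, h2]
  rw [show M * Real.sqrt (∑ j, ‖b.repr v j‖^2)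
      = Real.sqrt (M^2 * ∑ j, ‖b.repr v j‖^2) by
    rw [Real.sqrt_mul (sq_nonneg M), Real.sqrt_sq hM]]
  apply Real.sqrt_le_sqrt
  rw [Finset.mul_sum]
  apply Finset.sum_le_sum
  intro j _
  rw [norm_mul, mul_pow]
  apply mul_le_mul_of_nonneg_right _ (sq_nonneg _)
  exact pow_le_pow_left₀ (norm_nonneg _) (hc j) 2

theorem cheb_agsp (d : ℕ) (s η : ℝ) (hs : 0 ≤ s) (hη : η ∈ Set.Ioo (0 : ℝ) 1)
    (O Pr : EuclideanSpace ℂ (Fin d) →L[ℂ] EuclideanSpace ℂ (Fin d))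
    (hO : IsSelfAdjoint O)
    (hspec : ∀ μ : ℝ, (μ : ℂ) ∈ spectrum ℂ O → μ = 0 ∨ μ ∈ Set.Icc η 1)
    (hPr1 : IsIdempotentElem Pr) (hPr2 : IsSelfAdjoint Pr)
    (hPr3 : LinearMap.range (Pr : EuclideanSpace ℂ (Fin d) →ₗ[ℂ] EuclideanSpace ℂ (Fin d)) =
      LinearMap.ker (O : EuclideanSpace ℂ (Fin d) →ₗ[ℂ] EuclideanSpace ℂ (Fin d))) :
    Polynomial.aeval O ((chebPoly η s).map (algebraMap ℝ ℂ)) * Pr = Pr ∧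
      ‖Polynomial.aeval O ((chebPoly η s).map (algebraMap ℝ ℂ)) - Pr‖ ≤
        2 * Real.exp (-2 * s * Real.sqrt η) := by
  classical
  obtain ⟨h0, hbound⟩ := chebPoly_facts s η hs hη
  have hsym : (O : EuclideanSpace ℂ (Fin d) →ₗ[ℂ] EuclideanSpace ℂ (Fin d)).IsSymmetric :=
    ContinuousLinearMap.isSelfAdjoint_iff_isSymmetric.mp hO
  have hd : Module.finrank ℂ (EuclideanSpace ℂ (Fin d)) = d := finrank_euclideanSpace_fin
  set b := hsym.eigenvectorBasis hd with hb
  set μ := hsym.eigenvalues hd with hμ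
  have hOb : ∀ i, O (b i) = (μ i : ℂ) • b i := by
    intro i
    have := hsym.apply_eigenvectorBasis hd i
    exact this
  set q := (chebPoly η s).map (algebraMap ℝ ℂ) with hqdef
  set P := Polynomial.aeval O q with hP
  have hq : ∀ x : ℝ, q.eval ((x:ℝ):ℂ) = (((chebPoly η s).eval x : ℝ) : ℂ) := by
    intro x
    rw [hqdef, Polynomial.eval_map,
      show ((x:ℝ):ℂ) = algebraMap ℝ ℂ x from rfl, Polynomial.eval₂_at_apply]
    rfl
  have hrange : ∀ v, O (Pr v) = 0 := by
    intro v
    have hmem : Pr v ∈ LinearMap.range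
        (Pr : EuclideanSpace ℂ (Fin d) →ₗ[ℂ] EuclideanSpace ℂ (Fin d)) := ⟨v, rfl⟩
    rw [hPr3] at hmem
    exact hmem
  have hmemspec : ∀ i, ((μ i : ℝ) : ℂ) ∈ spectrum ℂ O := by
    intro i
    rw [spectrum.mem_iff]
    intro hUnit
    have hv : b i ≠ 0 := b.toBasis.ne_zero i
    obtain ⟨un, hun⟩ := hUnit
    have h1 : (algebraMap ℂ (EuclideanSpace ℂ (Fin d) →L[ℂ] EuclideanSpace ℂ (Fin d))
        ((μ i : ℝ):ℂ) - O) (b i) = 0 := by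
      rw [ContinuousLinearMap.sub_apply, Algebra.algebraMap_eq_smul_one,
        ContinuousLinearMap.smul_apply, ContinuousLinearMap.one_apply, hOb i, sub_self]
    apply hv
    calc b i = ((↑un⁻¹ * ↑un : EuclideanSpace ℂ (Fin d) →L[ℂ] EuclideanSpace ℂ (Fin d))) (b i) := by
          rw [Units.inv_mul]; simp
      _ = (↑un⁻¹ : EuclideanSpace ℂ (Fin d) →L[ℂ] EuclideanSpace ℂ (Fin d))
          ((↑un : EuclideanSpace ℂ (Fin d) →L[ℂ] EuclideanSpace ℂ (Fin d)) (b i)) := rfl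
      _ = 0 := by rw [hun, h1, map_zero]
  have hPrSym : (Pr : EuclideanSpace ℂ (Fin d) →ₗ[ℂ] EuclideanSpace ℂ (Fin d)).IsSymmetric :=
    ContinuousLinearMap.isSelfAdjoint_iff_isSymmetric.mp hPr2
  have hPrIdem : ∀ v, Pr (Pr v) = Pr v := by
    intro v
    have := congrArg (fun T : EuclideanSpace ℂ (Fin d) →L[ℂ] EuclideanSpace ℂ (Fin d) => T v) hPr1
    simpa [ContinuousLinearMap.mul_apply] using this
  have hker : ∀ i, μ i ≠ 0 → Pr (b i) = 0 := by
    intro i hne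
    have hperp : inner ℂ (b i) (Pr (b i)) = (0:ℂ) := by
      have h1 : inner ℂ (O (b i)) (Pr (b i)) = inner ℂ (b i) (O (Pr (b i))) := hsym (b i) (Pr (b i))
      rw [hOb i, hrange (b i), inner_zero_right, inner_smul_left] at h1
      have hc : (starRingEnd ℂ) ((μ i : ℝ):ℂ) ≠ 0 := by
        simp [Complex.conj_ofReal]
        exact_mod_cast hne
      exact (mul_eq_zero.mp h1).resolve_left hc
    have : inner ℂ (Pr (b i)) (Pr (b i)) = (0:ℂ) := by
      calc inner ℂ (Pr (b i)) (Pr (b i)) = inner ℂ (b i) (Pr (Pr (b i))) := hPrSym (b i) (Pr (b i))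
        _ = inner ℂ (b i) (Pr (b i)) := by rw [hPrIdem]
        _ = 0 := hperp
    exact inner_self_eq_zero.mp this
  have hker0 : ∀ i, μ i = 0 → Pr (b i) = b i := by
    intro i h0'
    have hbk : b i ∈ LinearMap.range
        (Pr : EuclideanSpace ℂ (Fin d) →ₗ[ℂ] EuclideanSpace ℂ (Fin d)) := by
      rw [hPr3]
      show O (b i) = 0
      rw [hOb i, h0']
      simp
    obtain ⟨w, hw⟩ := hbk
    have : Pr (Pr w) = Pr w := hPrIdem w
    rw [← hw]
    exact this
  have part1 : P * Pr = Pr := by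
    ext v
    rw [ContinuousLinearMap.mul_apply]
    have he := aeval_eig O (μ := (0:ℂ)) (v := Pr v) (by rw [hrange v]; simp) q
    rw [he, show ((0:ℂ)) = (((0:ℝ):ℝ):ℂ) by norm_num, hq 0, h0]
    simp
  refine ⟨part1, ?_⟩
  set M := 2 * Real.exp (-2 * s * Real.sqrt η) with hM
  have hMpos : 0 ≤ M := by positivity
  set c : Fin d → ℂ := fun i => if μ i = 0 then 0 else (((chebPoly η s).eval (μ i) : ℝ) : ℂ)
    with hc
  apply norm_le_of_diag _ b c M hMpos
  · intro i
    rw [ContinuousLinearMap.sub_apply]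
    have hPb : P (b i) = (((chebPoly η s).eval (μ i) : ℝ) : ℂ) • b i := by
      rw [hP, aeval_eig O (hOb i) q, hq]
    by_cases hi : μ i = 0
    · rw [hPb, hker0 i hi, hi, h0]
      simp [hc, hi]
    · rw [hPb, hker i hi, sub_zero]
      simp [hc, hi]
  · intro i
    by_cases hi : μ i = 0
    · simp [hc, hi]
      exact hMpos
    · have hicc : μ i ∈ Set.Icc η 1 := (hspec (μ i) (hmemspec i)).resolve_left hi
      have hbd := hbound (μ i) hicc
      simp only [hc, hi, if_false]
      rw [Complex.norm_real, Real.norm_eq_abs]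
      calc |(chebPoly η s).eval (μ i)| ≤ 2 * Real.exp (-2*s*Real.sqrt η) := hbd
        _ = M := by rw [hM]
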